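/- Let 0 < l < h < 1 and consider the 2×2 zero-sum game with payoff matrix A = [[(2 − h² − l²)/4, (2 − h − l)/4], [(2 − h − l)/4, (4 − (h + l)²)/8]] (searcher maximizing), whose rows/columns are the strategies rs and rd. Set a = 2h(1−h) + 2l(1−l) and b = 2(h+l) − (h+l)². Then 8A = (4 − 2h − 2l)·J + diag(a, b), where J is the all-ones matrix; a > 0 and b > 0; and the mixed strategy σ = (b/(a+b), a/(a+b)) is optimal for both players: for each pure strategy of the opponent, the expected payoff under σ equals V = (4 − 2h − 2l)/8 + ab/(8(a+b)), so V is the value of the game. -/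

import Mathlib

/-- Solution of the two-period learning game with `0 < l < h < 1`. For the
payoff matrix `A = [[(2−h²−l²)/4, (2−h−l)/4], [(2−h−l)/4, (4−(h+l)²)/8]]` on
strategies `(rs, rd)` and `a = 2h(1−h) + 2l(1−l)`, `b = 2(h+l) − (h+l)²`, one
has `8A = (4−2h−2l)·J + diag(a, b)` with `a, b > 0`, and the mixed strategy
`σ = (b/(a+b), a/(a+b))` is optimal for both players, giving against every
pure strategy of the opponent exactly the value
`V = (4−2h−2l)/8 + ab/(8(a+b))`. -/
theorem learning_game_solution (l h : ℝ) (hl : 0 < l) (hlh : l < h) (hh : h < 1)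
    (A : Matrix (Fin 2) (Fin 2) ℝ)
    (hA : A = !![(2 - h ^ 2 - l ^ 2) / 4, (2 - h - l) / 4;
                 (2 - h - l) / 4, (4 - (h + l) ^ 2) / 8])
    (a b : ℝ)
    (ha : a = 2 * h * (1 - h) + 2 * l * (1 - l))
    (hb : b = 2 * (h + l) - (h + l) ^ 2)
    (σ : Fin 2 → ℝ) (hσ : σ = ![b / (a + b), a / (a + b)])
    (V : ℝ) (hV : V = (4 - 2 * h - 2 * l) / 8 + a * b / (8 * (a + b))) :
    ((8 : ℝ) • A = (4 - 2 * h - 2 * l) • !![(1 : ℝ), 1; 1, 1] + Matrix.diagonal ![a, b]) ∧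
    0 < a ∧ 0 < b ∧
    (∀ c : Fin 2, ∑ r : Fin 2, σ r * A r c = V) ∧
    (∀ r : Fin 2, ∑ c : Fin 2, σ c * A r c = V) := by
  have hl1 : l < 1 := hlh.trans hh
  have hh0 : 0 < h := hl.trans hlh
  have ha' : 0 < a := by
    rw [ha]; nlinarith
  have hb' : 0 < b := by
    have : h + l < 2 := by linarith
    have h0 : 0 < h + l := by linarith
    have : (h + l) ^ 2 < 2 * (h + l) := by nlinarith
    rw [hb]; linarith
  have hab : a + b ≠ 0 := by positivity
  refine ⟨?_, ha', hb', ?_, ?_⟩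
  · subst hA ha hb
    ext i j
    fin_cases i <;> fin_cases j <;>
      simp [Matrix.smul_apply, Matrix.diagonal] <;> ring
  · intro c
    subst hA hσ hV ha hb
    fin_cases c <;>
      · simp [Fin.sum_univ_two]
        have hd : 2 * (h * (1 - h) + l * (1 - l)) + (h + l) * (2 - (h + l)) ≠ 0 := by
          intro e; apply hab; linear_combination e
        field_simp
        ring
  · intro r
    subst hA hσ hV ha hb
    fin_cases r <;>
      · simp [Fin.sum_univ_two]
        have hd : 2 * (h * (1 - h) + l * (1 - l)) + (h + l) * (2 - (h + l)) ≠ 0 := by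
          intro e; apply hab; linear_combination e
        field_simp
        ring
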